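/- arXiv:0712.0665 — 2 statements merged into one kernel-verified Lean document; each statement's English description precedes it below -/
import Mathlib

section
/- Let A be a Noetherian ring, M a finitely generated A-module, 𝔭 a minimal prime of Supp(M), and set t = length_{A_𝔭}(M_𝔭). Then there exists a chain of submodules 0 = N_0 ⊂ N_1 ⊂ ⋯ ⊂ N_t ⊆ M such that N_{k}/N_{k-1} ≅ A/𝔭 for 1 ≤ k ≤ t and 𝔭 ∉ Ass_A(M/N_t). -/
open CategoryTheory Submodule

section Helpers

variable {R : Type*} [Ring R]

/-- Transport a full composition series across a linear equivalence. -/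
lemma compSeries_of_linearEquiv {X Y : Type*} [AddCommGroup X] [Module R X]
    [AddCommGroup Y] [Module R Y] (e : X ≃ₗ[R] Y)
    (s : CompositionSeries (Submodule R X)) (hh : s.head = ⊥) (hl : s.last = ⊤) :
    ∃ s' : CompositionSeries (Submodule R Y),
      s'.head = ⊥ ∧ s'.last = ⊤ ∧ s'.length = s.length := by
  let f : Submodule R X ≃o Submodule R Y := Submodule.orderIsoMapComap e
  refine ⟨s.map ⟨f, fun h => (apply_covBy_apply_iff f).mpr h⟩, ?_, ?_, rfl⟩
  · rw [RelSeries.head_map, hh]; exact f.map_bot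
  · rw [RelSeries.last_map, hl]; exact f.map_top

/-- Quotient by an atom drops the composition-series length by exactly one. -/
lemma compSeries_quotient_atom {X : Type*} [AddCommGroup X] [Module R X]
    (s : CompositionSeries (Submodule R X)) (hh : s.head = ⊥) (hl : s.last = ⊤)
    (S : Submodule R X) (hS : IsAtom S) :
    ∃ s' : CompositionSeries (Submodule R (X ⧸ S)),
      s'.head = ⊥ ∧ s'.last = ⊤ ∧ s'.length + 1 = s.length := by
  have hfl : IsFiniteLength R X := isFiniteLength_of_exists_compositionSeries ⟨s, hh, hl⟩
  obtain ⟨hn, ha⟩ := isFiniteLength_iff_isNoetherian_isArtinian.mp hfl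
  obtain ⟨s', hh', hl'⟩ := exists_compositionSeries_of_isNoetherian_isArtinian R (X ⧸ S)
  have hsurj : Function.Surjective S.mkQ := S.mkQ_surjective
  have hmc : ∀ a : Submodule R (X ⧸ S), Submodule.map S.mkQ (Submodule.comap S.mkQ a) = a :=
    fun a => Submodule.map_comap_eq_of_surjective hsurj a
  have hcov : ∀ {a b : Submodule R (X ⧸ S)}, a ⋖ b →
      Submodule.comap S.mkQ a ⋖ Submodule.comap S.mkQ b := by
    intro a b hab
    have hlt : Submodule.comap S.mkQ a < Submodule.comap S.mkQ b :=
      lt_of_le_of_ne (Submodule.comap_mono hab.le)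
        (fun h => hab.lt.ne (by rw [← hmc a, ← hmc b, h]))
    refine ⟨hlt, fun c hc1 hc2 => ?_⟩
    have hSc : S ≤ c := by
      refine le_trans (fun x hx => ?_) hc1.le
      have hx0 : S.mkQ x = 0 := by simpa [Submodule.mkQ_apply, Submodule.Quotient.mk_eq_zero]
        using hx
      simp [Submodule.mem_comap, hx0]
    have hcc : Submodule.comap S.mkQ (Submodule.map S.mkQ c) = c := by
      rw [Submodule.comap_map_eq, Submodule.ker_mkQ, sup_eq_left.mpr hSc]
    have hm1 := Submodule.map_mono (f := S.mkQ) hc1.le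
    rw [hmc a] at hm1
    have hm2 := Submodule.map_mono (f := S.mkQ) hc2.le
    rw [hmc b] at hm2
    have h1 : a < Submodule.map S.mkQ c :=
      lt_of_le_of_ne hm1 (fun h => hc1.ne (by rw [h, hcc]))
    have h2 : Submodule.map S.mkQ c < b :=
      lt_of_le_of_ne hm2 (fun h => hc2.ne (by rw [← hcc, h]))
    exact hab.2 h1 h2
  have h0 : (⊥ : Submodule R X) ⋖ (s'.map (s := {(x, y) : Submodule R X × Submodule R X | JordanHolderLattice.IsMaximal x y})
    ⟨Submodule.comap S.mkQ, fun h => hcov h⟩).head := by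
    rw [RelSeries.head_map]
    show (⊥ : Submodule R X) ⋖ Submodule.comap S.mkQ s'.head
    rw [hh', Submodule.comap_bot, Submodule.ker_mkQ]
    exact hS.bot_covBy
  refine ⟨s', hh', hl', ?_⟩
  have hjh := CompositionSeries.jordan_holder s
    ((s'.map ⟨Submodule.comap S.mkQ, fun h => hcov h⟩).cons ⊥ h0) ?_ ?_
  · have := hjh.length_eq
    simp only [RelSeries.cons_length, RelSeries.map_length] at this; omega
  · rw [RelSeries.head_cons, hh]
  · rw [RelSeries.last_cons, RelSeries.last_map, hl]
    show ⊤ = Submodule.comap S.mkQ s'.last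
    rw [hl', Submodule.comap_top]

end Helpers
/-- Subquotients pull back along surjections whose kernel is below the smaller submodule. -/
lemma subquotient_comap_equiv {R M M' : Type*} [CommRing R] [AddCommGroup M] [Module R M]
    [AddCommGroup M'] [Module R M'] (π : M →ₗ[R] M') (hπ : Function.Surjective π)
    (Q₁ Q₂ : Submodule R M') :
    Nonempty ((↥(Submodule.comap π Q₂) ⧸
        Submodule.comap (Submodule.comap π Q₂).subtype (Submodule.comap π Q₁)) ≃ₗ[R]
      (↥Q₂ ⧸ Submodule.comap Q₂.subtype Q₁)) := by
  let φ : ↥(Submodule.comap π Q₂) →ₗ[R] ↥Q₂ := π.restrict (fun x hx => hx)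
  let ψ := (Submodule.comap Q₂.subtype Q₁).mkQ.comp φ
  have hψs : Function.Surjective ψ := by
    apply Function.Surjective.comp (Submodule.mkQ_surjective _)
    rintro ⟨y, hy⟩
    obtain ⟨x, rfl⟩ := hπ y
    exact ⟨⟨x, hy⟩, rfl⟩
  have hker : LinearMap.ker ψ =
      Submodule.comap (Submodule.comap π Q₂).subtype (Submodule.comap π Q₁) := by
    ext x
    simp only [ψ, LinearMap.mem_ker, LinearMap.comp_apply, Submodule.mem_comap]
    rw [← LinearMap.mem_ker, Submodule.ker_mkQ]
    rfl
  exact ⟨(Submodule.quotEquivOfEq _ _ hker.symm).trans (ψ.quotKerEquivOfSurjective hψs)⟩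
lemma exists_ann_eq (A : Type) [CommRing A] [IsNoetherianRing A]
    (𝔭 : Ideal A) [h𝔭 : 𝔭.IsPrime]
    (M : Type) [AddCommGroup M] [Module A M]
    (hmin' : ∀ q : Ideal A, q.IsPrime → Module.annihilator A M ≤ q → q ≤ 𝔭 → q = 𝔭)
    [Nontrivial (LocalizedModule 𝔭.primeCompl M)] :
    ∃ y : M, (Submodule.span A {y}).annihilator = 𝔭 := by
  haveI : IsNoetherianRing (Localization.AtPrime 𝔭) :=
    IsLocalization.isNoetherianRing 𝔭.primeCompl (Localization.AtPrime 𝔭) inferInstance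
  obtain ⟨q, hq⟩ := associatedPrimes.nonempty (Localization.AtPrime 𝔭)
    (LocalizedModule 𝔭.primeCompl M)
  obtain ⟨hqP, x, hx⟩ := isAssociatedPrime_iff.mp hq
  rw [Submodule.bot_colon'] at hx
  set φ := algebraMap A (Localization.AtPrime 𝔭) with hφ
  have hq1 : q.comap φ ≤ 𝔭 := by
    intro a ha
    by_contra hcon
    exact hqP.ne_top (Ideal.eq_top_of_isUnit_mem q ha
      (IsLocalization.map_units (Localization.AtPrime 𝔭) (⟨a, hcon⟩ : 𝔭.primeCompl)))
  have hsmul0 : ∀ (a : A), a ∈ Module.annihilator A M →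
      ∀ z : LocalizedModule 𝔭.primeCompl M, a • z = 0 := by
    intro a ha z
    induction z using LocalizedModule.induction_on with
    | h m s =>
      rw [LocalizedModule.smul'_mk, Module.mem_annihilator.mp ha m, LocalizedModule.zero_mk]
  have hq2 : Module.annihilator A M ≤ q.comap φ := by
    intro a ha
    show φ a ∈ q
    rw [hx, Submodule.mem_annihilator_span_singleton, algebraMap_smul]
    exact hsmul0 a ha x
  have hq3 : q.comap φ = 𝔭 := hmin' _ (Ideal.IsPrime.comap φ) hq2 hq1
  -- write x as a fraction
  revert hx
  induction x using LocalizedModule.induction_on with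
  | h m sden =>
    intro hx
    have hmem : ∀ p : A, p ∈ 𝔭 → ∃ u : 𝔭.primeCompl, (u : A) • p • m = 0 := by
      intro p hp
      rw [← hq3] at hp
      have : p • LocalizedModule.mk m sden = 0 := by
        rw [← algebraMap_smul (Localization.AtPrime 𝔭),
          ← Submodule.mem_annihilator_span_singleton, ← hx]
        exact hp
      rw [LocalizedModule.smul'_mk, show (0 : LocalizedModule 𝔭.primeCompl M) =
        LocalizedModule.mk 0 1 from (LocalizedModule.zero_mk 1).symm,
        LocalizedModule.mk_eq] at this
      obtain ⟨u, hu⟩ := this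
      exact ⟨u, by simpa [Submonoid.smul_def] using hu⟩
    obtain ⟨T, hT⟩ : 𝔭.FG := IsNoetherian.noetherian 𝔭
    classical
    let u : A → 𝔭.primeCompl := fun p => if h : p ∈ 𝔭 then (hmem p h).choose else 1
    let c : 𝔭.primeCompl := ∏ p ∈ T, u p
    refine ⟨(c : A) • m, le_antisymm ?_ ?_⟩
    · -- annihilator ≤ 𝔭
      intro a ha
      rw [Submodule.mem_annihilator_span_singleton] at ha
      rw [← hq3]
      show φ a ∈ q
      rw [hx, Submodule.mem_annihilator_span_singleton, algebraMap_smul,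
        LocalizedModule.smul'_mk, show (0 : LocalizedModule 𝔭.primeCompl M) =
        LocalizedModule.mk 0 1 from (LocalizedModule.zero_mk 1).symm, LocalizedModule.mk_eq]
      refine ⟨c, ?_⟩
      simp only [one_smul, smul_zero, smul_zero]
      rw [smul_comm]
      exact ha
    · -- 𝔭 ≤ annihilator
      have hTle : Ideal.span ↑T ≤ (Submodule.span A {(c : A) • m}).annihilator := by
        rw [Ideal.span_le]
        intro p hp
        have hpmem : p ∈ 𝔭 := hT ▸ Ideal.subset_span hp
        rw [SetLike.mem_coe, Submodule.mem_annihilator_span_singleton]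
        have hc : (∏ x ∈ T.erase p, u x) * u p = c := Finset.prod_erase_mul T u hp
        have hup : (u p : A) • p • m = 0 := by
          simpa only [u, dif_pos hpmem] using (hmem p hpmem).choose_spec
        calc p • (c : A) • m = (((∏ x ∈ T.erase p, u x) : 𝔭.primeCompl) : A) •
              ((u p : A) • p • m) := by
              rw [← hc]; push_cast; rw [smul_smul, smul_smul, smul_smul]; ring_nf
          _ = 0 := by rw [hup, smul_zero]
      exact hT ▸ hTle
lemma isAtom_localized_span (A : Type) [CommRing A] (𝔭 : Ideal A) [h𝔭 : 𝔭.IsPrime]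
    (M : Type) [AddCommGroup M] [Module A M] (y : M)
    (hann : (Submodule.span A {y}).annihilator = 𝔭) :
    IsAtom ((Submodule.span A {y}).localized 𝔭.primeCompl) := by
  set Aₚ := Localization.AtPrime 𝔭
  set z : LocalizedModule 𝔭.primeCompl M := LocalizedModule.mk y 1 with hz
  have hloc : (Submodule.span A {y}).localized 𝔭.primeCompl = Submodule.span Aₚ {z} := by
    rw [Submodule.localized, Submodule.localized'_span, Set.image_singleton]
    rfl
  rw [hloc, ← isSimpleModule_iff_isAtom]
  have hz0 : z ≠ 0 := by
    intro hz0
    rw [hz, show (0 : LocalizedModule 𝔭.primeCompl M) = LocalizedModule.mk 0 1 from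
      (LocalizedModule.zero_mk 1).symm, LocalizedModule.mk_eq] at hz0
    obtain ⟨u, hu⟩ := hz0
    simp only [one_smul, smul_zero] at hu
    have hmem : (u : A) ∈ (Submodule.span A {y}).annihilator :=
      (Submodule.mem_annihilator_span_singleton y (u : A)).mpr (by simpa [Submonoid.smul_def] using hu)
    exact u.2 (hann ▸ hmem)
  have hker : LinearMap.ker (LinearMap.toSpanSingleton Aₚ (LocalizedModule 𝔭.primeCompl M) z) =
      IsLocalRing.maximalIdeal Aₚ := by
    apply le_antisymm
    · apply IsLocalRing.le_maximalIdeal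
      intro htop
      apply hz0
      have : (1 : Aₚ) ∈ LinearMap.ker (LinearMap.toSpanSingleton Aₚ _ z) := htop ▸ trivial
      simpa using this
    · rw [← Localization.AtPrime.map_eq_maximalIdeal, Ideal.map_le_iff_le_comap]
      intro p hp
      simp only [Ideal.mem_comap, LinearMap.mem_ker, LinearMap.toSpanSingleton_apply]
      rw [LinearMap.toSpanSingleton_apply, algebraMap_smul, hz, LocalizedModule.smul'_mk,
        show p • y = 0 by rw [← Submodule.mem_annihilator_span_singleton, hann]; exact hp,
        LocalizedModule.zero_mk]
  have e1 : ↥(Submodule.span Aₚ {z}) ≃ₗ[Aₚ] Aₚ ⧸ IsLocalRing.maximalIdeal Aₚ := by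
    refine (LinearEquiv.ofEq _ _ ?_).trans
      ((LinearMap.quotKerEquivRange (LinearMap.toSpanSingleton Aₚ _ z)).symm.trans
        (Submodule.quotEquivOfEq _ _ hker))
    exact (LinearMap.span_singleton_eq_range Aₚ _ z)
  haveI : IsSimpleModule Aₚ (Aₚ ⧸ IsLocalRing.maximalIdeal Aₚ) :=
    isSimpleModule_iff_isCoatom.mpr (Ideal.isMaximal_def.mp (IsLocalRing.maximalIdeal.isMaximal Aₚ))
  exact IsSimpleModule.congr e1
open Submodule

lemma not_assoc_of_subsingleton (A : Type) [CommRing A] (𝔭 : Ideal A) [h𝔭 : 𝔭.IsPrime]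
    (M : Type) [AddCommGroup M] [Module A M]
    (hsub : Subsingleton (LocalizedModule 𝔭.primeCompl M)) :
    𝔭 ∉ associatedPrimes A M := by
  rintro ⟨hp, x, hx⟩
  have key : ∀ v : A, v ∈ 𝔭.primeCompl → v • x ≠ 0 := by
    intro v hv hvx
    apply hv
    rw [hx]
    exact Ideal.le_radical (Submodule.mem_colon_singleton.mpr ((Submodule.mem_bot A).mpr hvx))
  have h0 : LocalizedModule.mk x (1 : 𝔭.primeCompl) = LocalizedModule.mk 0 1 :=
    Subsingleton.elim _ _
  rw [LocalizedModule.mk_eq] at h0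
  obtain ⟨u, hu⟩ := h0
  simp only [one_smul, smul_zero] at hu
  exact key u u.2 hu

theorem key (A : Type) [CommRing A] [IsNoetherianRing A] (𝔭 : Ideal A) [h𝔭 : 𝔭.IsPrime] :
    ∀ (t : ℕ) (M : Type) [AddCommGroup M] [Module A M] [Module.Finite A M],
      (∀ q : Ideal A, q.IsPrime → Module.annihilator A M ≤ q → q ≤ 𝔭 → q = 𝔭) →
      ∀ s : CompositionSeries
          (Submodule (Localization.AtPrime 𝔭) (LocalizedModule 𝔭.primeCompl M)),
        s.head = ⊥ → s.last = ⊤ → s.length = t →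
      ∃ N : Fin (t + 1) → Submodule A M,
        N 0 = ⊥ ∧ StrictMono N ∧
        (∀ k : Fin t, Nonempty
          ((↥(N k.succ) ⧸ Submodule.comap (N k.succ).subtype (N k.castSucc)) ≃ₗ[A] A ⧸ 𝔭)) ∧
        𝔭 ∉ associatedPrimes A (M ⧸ N (Fin.last t)) := by
  intro t
  induction t with
  | zero =>
    intro M _ _ _ hmin' s hh hl hlen
    have hbt : (⊥ : Submodule (Localization.AtPrime 𝔭) (LocalizedModule 𝔭.primeCompl M)) = ⊤ := by
      rw [← hh, ← hl]
      show s 0 = s (Fin.last s.length)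
      congr 1
      ext
      simp only [Fin.val_zero, Fin.val_last]
      omega
    have hsub : Subsingleton (LocalizedModule 𝔭.primeCompl M) := by
      have := Submodule.subsingleton_iff (Localization.AtPrime 𝔭)
        (M := LocalizedModule 𝔭.primeCompl M)
      apply this.mp
      exact subsingleton_of_bot_eq_top hbt
    refine ⟨fun _ => ⊥, rfl, fun i j hij => by
      rw [Fin.lt_def] at hij; have := i.is_lt; have := j.is_lt; omega,
      fun k => k.elim0, ?_⟩
    rw [LinearEquiv.AssociatedPrimes.eq (Submodule.quotEquivOfEqBot ⊥ rfl)]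
    exact not_assoc_of_subsingleton A 𝔭 M hsub
  | succ n ih =>
    intro M _ _ _ hmin' s hh hl hlen
    haveI hnt : Nontrivial (LocalizedModule 𝔭.primeCompl M) := by
      rw [← not_subsingleton_iff_nontrivial]
      intro hsub
      have : (⊥ : Submodule (Localization.AtPrime 𝔭) (LocalizedModule 𝔭.primeCompl M)) = ⊤ :=
        Subsingleton.elim _ _
      have hlt : s.head < s.last := by
        apply s.strictMono
        rw [Fin.lt_iff_val_lt_val]
        simpa [hlen] using Nat.succ_pos n
      rw [hh, hl, this] at hlt
      exact lt_irrefl _ hlt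
    obtain ⟨y, hann⟩ := exists_ann_eq A 𝔭 M hmin'
    set N₁ : Submodule A M := Submodule.span A {y} with hN₁
    have hN₁bot : N₁ ≠ ⊥ := by
      intro h
      have htop : N₁.annihilator = ⊤ := by rw [h, Submodule.annihilator_bot]
      rw [hann] at htop
      exact h𝔭.ne_top htop
    have hatom := isAtom_localized_span A 𝔭 M y hann
    obtain ⟨s₂, hh₂, hl₂, hlen₂⟩ := compSeries_quotient_atom s hh hl _ hatom
    let e0 := IsLocalizedModule.iso 𝔭.primeCompl (N₁.toLocalizedQuotient 𝔭.primeCompl)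
    let f1 := LinearMap.extendScalarsOfIsLocalization 𝔭.primeCompl (Localization.AtPrime 𝔭)
      e0.toLinearMap
    let f2 := LinearMap.extendScalarsOfIsLocalization 𝔭.primeCompl (Localization.AtPrime 𝔭)
      e0.symm.toLinearMap
    let e : LocalizedModule 𝔭.primeCompl (M ⧸ N₁) ≃ₗ[Localization.AtPrime 𝔭]
        (LocalizedModule 𝔭.primeCompl M ⧸ N₁.localized 𝔭.primeCompl) :=
      LinearEquiv.ofLinear f1 f2 (LinearMap.ext fun x => e0.apply_symm_apply x)
        (LinearMap.ext fun x => e0.symm_apply_apply x)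
    haveI : Module.Finite A (M ⧸ N₁) := Module.Finite.of_surjective N₁.mkQ N₁.mkQ_surjective
    obtain ⟨s₃, hh₃, hl₃, hlen₃⟩ := compSeries_of_linearEquiv e.symm s₂ hh₂ hl₂
    have hlen₃' : s₃.length = n := by omega
    have hannle : Module.annihilator A M ≤ Module.annihilator A (M ⧸ N₁) := by
      intro a ha
      rw [Module.mem_annihilator] at ha ⊢
      intro xb
      obtain ⟨x, rfl⟩ := Submodule.Quotient.mk_surjective N₁ xb
      rw [← Submodule.Quotient.mk_smul, ha, Submodule.Quotient.mk_zero]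
    obtain ⟨N', hN'0, hN'mono, hN'iso, hN'ass⟩ := ih (M ⧸ N₁)
      (fun q hq hle hle' => hmin' q hq (hannle.trans hle) hle') s₃ hh₃ hl₃ hlen₃'
    have hπ : Function.Surjective N₁.mkQ := N₁.mkQ_surjective
    have hmc : ∀ a : Submodule A (M ⧸ N₁), Submodule.map N₁.mkQ (Submodule.comap N₁.mkQ a) = a :=
      fun a => Submodule.map_comap_eq_of_surjective hπ a
    have hcomaplt : ∀ {a b : Submodule A (M ⧸ N₁)}, a < b →
        Submodule.comap N₁.mkQ a < Submodule.comap N₁.mkQ b := fun {a b} hab =>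
      lt_of_le_of_ne (Submodule.comap_mono hab.le)
        (fun h => hab.ne (by rw [← hmc a, ← hmc b, h]))
    refine ⟨Fin.cons ⊥ (fun i => Submodule.comap N₁.mkQ (N' i)), Fin.cons_zero _ _, ?_, ?_, ?_⟩
    · rw [Fin.strictMono_iff_lt_succ]
      intro i
      induction i using Fin.cases with
      | zero =>
        rw [Fin.castSucc_zero, Fin.cons_zero, Fin.succ_zero_eq_one,
          show (1 : Fin (n + 2)) = Fin.succ 0 from rfl, Fin.cons_succ, hN'0,
          Submodule.comap_bot, Submodule.ker_mkQ]
        exact bot_lt_iff_ne_bot.mpr hN₁bot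
      | succ j =>
        rw [← Fin.succ_castSucc, Fin.cons_succ, Fin.cons_succ]
        exact hcomaplt (hN'mono Fin.castSucc_lt_succ)
    · intro k
      induction k using Fin.cases with
      | zero =>
        rw [Fin.castSucc_zero, Fin.cons_zero, Fin.succ_zero_eq_one,
          show (1 : Fin (n + 2)) = Fin.succ 0 from rfl, Fin.cons_succ, hN'0,
          Submodule.comap_bot, Submodule.ker_mkQ]
        have hker : LinearMap.ker (LinearMap.toSpanSingleton A M y) = 𝔭 := by
          ext a
          rw [LinearMap.mem_ker, LinearMap.toSpanSingleton_apply, ← hann,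
            Submodule.mem_annihilator_span_singleton]
        have hsub0 : Submodule.comap N₁.subtype (⊥ : Submodule A M) = ⊥ := by
          rw [Submodule.comap_bot, Submodule.ker_subtype]
        have eA : (↥N₁ : Type) ≃ₗ[A] (A ⧸ 𝔭) :=
          ((LinearEquiv.ofEq _ _ (LinearMap.span_singleton_eq_range A M y)).trans
            (LinearMap.quotKerEquivRange (LinearMap.toSpanSingleton A M y)).symm).trans
            (Submodule.quotEquivOfEq _ _ hker)
        exact ⟨(Submodule.quotEquivOfEq _ _ hsub0).trans
          ((Submodule.quotEquivOfEqBot _ rfl).trans eA)⟩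
      | succ j =>
        rw [← Fin.succ_castSucc, Fin.cons_succ, Fin.cons_succ]
        obtain ⟨e1⟩ := subquotient_comap_equiv N₁.mkQ hπ (N' j.castSucc) (N' j.succ)
        obtain ⟨e2⟩ := hN'iso j
        exact ⟨e1.trans e2⟩
    · rw [show Fin.last (n + 1) = Fin.succ (Fin.last n) from rfl, Fin.cons_succ]
      set Q := N' (Fin.last n)
      let ψ : M →ₗ[A] (M ⧸ N₁) ⧸ Q := Q.mkQ.comp N₁.mkQ
      have hψ : Function.Surjective ψ := (Submodule.mkQ_surjective Q).comp hπ
      have hkerψ : LinearMap.ker ψ = Submodule.comap N₁.mkQ Q := by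
        rw [LinearMap.ker_comp, Submodule.ker_mkQ]
      have e3 : (M ⧸ Submodule.comap N₁.mkQ Q) ≃ₗ[A] ((M ⧸ N₁) ⧸ Q) :=
        (Submodule.quotEquivOfEq _ _ hkerψ.symm).trans (ψ.quotKerEquivOfSurjective hψ)
      rw [LinearEquiv.AssociatedPrimes.eq e3]
      exact hN'ass

/-- For a minimal prime `𝔭` of the support of a finitely generated module `M` over a Noetherian
ring, if `t` is the length of `M_𝔭` over `A_𝔭` (witnessed by a composition series), then there
is a chain `0 = N 0 ⊂ N 1 ⊂ ⋯ ⊂ N t ⊆ M` with all successive quotients isomorphic to `A/𝔭`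
and `𝔭 ∉ Ass(M / N t)`. -/
theorem stmt9 (A : Type) [CommRing A] [IsNoetherianRing A]
    (M : Type) [AddCommGroup M] [Module A M] [Module.Finite A M]
    (𝔭 : Ideal A) [h𝔭 : 𝔭.IsPrime]
    (hmin : 𝔭 ∈ (Module.annihilator A M).minimalPrimes
)
    (t : ℕ)
    (s : CompositionSeries (Submodule (Localization.AtPrime 𝔭) (LocalizedModule 𝔭.primeCompl M)))
    (hhead : s.head = ⊥) (hlast : s.last = ⊤) (hlen : s.length = t) :
    ∃ N : Fin (t + 1) → Submodule A M,
      N 0 = ⊥ ∧ StrictMono N ∧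
      (∀ k : Fin t, Nonempty
        ((↥(N k.succ) ⧸ Submodule.comap (N k.succ).subtype (N k.castSucc)) ≃ₗ[A] A ⧸ 𝔭)) ∧
      𝔭 ∉ associatedPrimes A (M ⧸ N (Fin.last t)) := by
  exact key A 𝔭 t M
    (fun q hq hle hle' => le_antisymm hle' (hmin.2 ⟨hq, hle⟩ hle')) s hhead hlast hlen
end

section
/- Let (A, 𝔪) be a Noetherian local ring, 𝔭 a prime ideal, M a finitely generated A-module, and suppose there is an injection A/𝔭 ↪ M with cokernel Q, where some y ∈ A \ 𝔭 annihilates Q. If x ∈ A annihilates H^i_𝔪(M) for all i < h, then (xy)^2 annihilates H^i_𝔪(A/𝔭) for all i < h. -/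
open CategoryTheory

section AuxLinear

open Opposite

variable {R : Type*} [Semiring R]

namespace LocalCohomAux

/-- The opposite of an `R`-linear category is `R`-linear. -/
instance oppositeLinear (C : Type*) [Category C] [Preadditive C]
    [CategoryTheory.Linear R C] : CategoryTheory.Linear R Cᵒᵖ where
  homModule X Y :=
    { smul := fun r f => (r • f.unop).op
      one_smul := fun f => Quiver.Hom.unop_inj (one_smul _ _)
      mul_smul := fun r s f => Quiver.Hom.unop_inj (mul_smul r s f.unop)
      smul_zero := fun r => Quiver.Hom.unop_inj (smul_zero r)
      smul_add := fun r f g => Quiver.Hom.unop_inj (smul_add r f.unop g.unop)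
      add_smul := fun r s f => Quiver.Hom.unop_inj (add_smul r s f.unop)
      zero_smul := fun f => Quiver.Hom.unop_inj (zero_smul R f.unop) }
  smul_comp X Y Z r f g := Quiver.Hom.unop_inj (CategoryTheory.Linear.comp_smul _ _ _ g.unop r f.unop)
  comp_smul X Y Z f r g := Quiver.Hom.unop_inj (CategoryTheory.Linear.smul_comp _ _ _ r g.unop f.unop)

variable {C : Type*} [Category C] [Preadditive C] [CategoryTheory.Linear R C]

@[simp]
lemma unop_smul {X Y : Cᵒᵖ} (r : R) (f : X ⟶ Y) : (r • f).unop = r • f.unop := rfl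

@[simp]
lemma op_smul {X Y : C} (r : R) (f : X ⟶ Y) : (r • f).op = r • f.op := rfl

end LocalCohomAux

end AuxLinear

section AuxHomology

open CategoryTheory.Limits

variable {R : Type*} [Semiring R]
variable {C : Type*} [Category C] [Preadditive C] [CategoryTheory.Linear R C]
  [CategoryWithHomology C]

namespace LocalCohomAux

lemma shortComplexFunctor_map_smul {ι : Type*} {c : ComplexShape ι}
    {K L : HomologicalComplex C c} (f : K ⟶ L) (r : R) (i : ι) :
    (HomologicalComplex.shortComplexFunctor C c i).map (r • f) =
      r • (HomologicalComplex.shortComplexFunctor C c i).map f := by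
  ext <;> rfl

lemma homologyMap_smul {ι : Type*} {c : ComplexShape ι}
    {K L : HomologicalComplex C c} (f : K ⟶ L) (r : R) (i : ι) :
    HomologicalComplex.homologyMap (r • f) i = r • HomologicalComplex.homologyMap f i := by
  dsimp only [HomologicalComplex.homologyMap]
  rw [shortComplexFunctor_map_smul, ShortComplex.homologyMap_smul]
  rfl

lemma homotopyCategory_homologyFunctor_map_smul {ι : Type*} {c : ComplexShape ι}
    {K L : HomotopyCategory C c} (φ : K ⟶ L) (r : R) (n : ι) :
    (HomotopyCategory.homologyFunctor C c n).map (r • φ) =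
      r • (HomotopyCategory.homologyFunctor C c n).map φ := by
  obtain ⟨f, rfl⟩ := (HomotopyCategory.quotient C c).map_surjective φ
  have e := HomotopyCategory.homologyFunctorFactors C c n
  have key : ∀ (g : K.as ⟶ L.as),
      (HomotopyCategory.homologyFunctor C c n).map ((HomotopyCategory.quotient C c).map g) =
        e.hom.app _ ≫ HomologicalComplex.homologyMap g n ≫ e.inv.app _ := by
    intro g
    exact (NatIso.naturality_2 e g).symm
  erw [← Functor.map_smul (HomotopyCategory.quotient C c) r f, key, key, homologyMap_smul,
    CategoryTheory.Linear.smul_comp, CategoryTheory.Linear.comp_smul]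
  rfl

end LocalCohomAux

end AuxHomology

section AuxDerived

open CategoryTheory.Limits

variable {R : Type*} [Semiring R]
variable {C : Type*} [Category C] [Abelian C] [EnoughProjectives C]
variable {D : Type*} [Category D] [Abelian D] [CategoryTheory.Linear R D]

namespace LocalCohomAux

lemma mapHomologicalComplex_app_smul {F G : C ⥤ D} [F.Additive] [G.Additive]
    (α : F ⟶ G) (r : R) {ι : Type*} (c : ComplexShape ι) (K : HomologicalComplex C c) :
    (NatTrans.mapHomologicalComplex (r • α) c).app K =
      r • (NatTrans.mapHomologicalComplex α c).app K := by
  ext i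
  rfl

lemma leftDerived_smul {F G : C ⥤ D} [F.Additive] [G.Additive]
    (α : F ⟶ G) (r : R) (n : ℕ) :
    NatTrans.leftDerived (r • α) n = r • NatTrans.leftDerived α n := by
  ext X
  dsimp only [NatTrans.leftDerived, NatTrans.leftDerivedToHomotopyCategory,
    Functor.whiskerRight, Functor.whiskerLeft, NatTrans.mapHomotopyCategory]
  erw [NatTrans.app_smul]
  dsimp only [NatTrans.leftDerived, NatTrans.leftDerivedToHomotopyCategory,
    Functor.whiskerRight, Functor.whiskerLeft, NatTrans.mapHomotopyCategory]
  erw [mapHomologicalComplex_app_smul, Functor.map_smul,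
    homotopyCategory_homologyFunctor_map_smul]
  rfl

end LocalCohomAux

end AuxDerived

section AuxExt

open Opposite

namespace LocalCohomAux

variable (R : Type*) [CommRing R]
variable (C : Type*) [Category C] [Abelian C] [CategoryTheory.Linear R C] [EnoughProjectives C]

lemma linearYoneda_map_smul {Y Y' : C} (φ : Y ⟶ Y') (r : R) :
    (linearYoneda R C).map (r • φ) = r • (linearYoneda R C).map φ := by
  apply NatTrans.ext
  funext Z
  apply ModuleCat.hom_ext
  apply LinearMap.ext
  intro g
  show g ≫ (r • φ) = r • ((linearYoneda R C).map φ).app Z g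
  exact CategoryTheory.Linear.comp_smul _ _ _ g r φ

lemma Ext_obj_map_smul (n : ℕ) (X : Cᵒᵖ) {Y Y' : C} (φ : Y ⟶ Y') (r : R) :
    ((Ext R C n).obj X).map (r • φ) = r • ((Ext R C n).obj X).map φ := by
  show (NatTrans.leftOp (NatTrans.leftDerived
      (NatTrans.rightOp ((linearYoneda R C).map (r • φ))) n)).app X =
    r • (NatTrans.leftOp (NatTrans.leftDerived
      (NatTrans.rightOp ((linearYoneda R C).map φ)) n)).app X
  rw [linearYoneda_map_smul]
  have h1 : NatTrans.rightOp (r • (linearYoneda R C).map φ) =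
      r • NatTrans.rightOp ((linearYoneda R C).map φ) := rfl
  rw [h1, leftDerived_smul]
  rfl

end LocalCohomAux

end AuxExt

section AuxColim

open CategoryTheory.Limits Opposite

namespace LocalCohomAux

variable {A : Type} [CommRing A] [IsNoetherianRing A]

lemma localCohomology_map_smul (J : Ideal A) (i : ℕ) {N N' : ModuleCat A}
    (φ : N ⟶ N') (r : A) :
    (localCohomology J i).map (r • φ) = r • (localCohomology J i).map φ := by
  show (colimit (localCohomology.diagram (localCohomology.idealPowersDiagram J) i)).map (r • φ) =
    r • (colimit (localCohomology.diagram (localCohomology.idealPowersDiagram J) i)).map φ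
  apply colimit_obj_ext
  intro j
  have nat1 := (colimit.ι (localCohomology.diagram (localCohomology.idealPowersDiagram J) i)
    j).naturality (r • φ)
  have nat2 := (colimit.ι (localCohomology.diagram (localCohomology.idealPowersDiagram J) i)
    j).naturality φ
  rw [← nat1]
  have hsm : ((localCohomology.diagram (localCohomology.idealPowersDiagram J) i).obj j).map
      (r • φ) = r • ((localCohomology.diagram (localCohomology.idealPowersDiagram J) i).obj
      j).map φ :=
    Ext_obj_map_smul A (ModuleCat A) i _ φ r
  rw [hsm, CategoryTheory.Linear.smul_comp, nat2, CategoryTheory.Linear.comp_smul]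

end LocalCohomAux

end AuxColim

/-- If `0 → A/𝔭 → M → Q → 0` is exact with `y ∉ 𝔭` annihilating `Q`, and `x` annihilates
`H^i_𝔪(M)` for all `i < h`, then `(xy)^2` annihilates `H^i_𝔪(A/𝔭)` for all `i < h`. -/
theorem stmt10 (A : Type) [CommRing A] [IsNoetherianRing A] [IsLocalRing A]
    (M : Type) [AddCommGroup M] [Module A M] [Module.Finite A M]
    (𝔭 : Ideal A) (h𝔭 : 𝔭.IsPrime)
    (f : (A ⧸ 𝔭) →ₗ[A] M) (hf : Function.Injective f)
    (y : A) (hy : y ∉ 𝔭)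
    (hyQ : ∀ q : M ⧸ LinearMap.range f, y • q = 0)
    (h : ℕ) (x : A)
    (hx : ∀ i < h, x ∈ Module.annihilator A
      ((localCohomology (IsLocalRing.maximalIdeal A) i).obj (ModuleCat.of A M))) :
    ∀ i < h, (x * y) ^ 2 ∈ Module.annihilator A
      ((localCohomology (IsLocalRing.maximalIdeal A) i).obj (ModuleCat.of A (A ⧸ 𝔭))) := by
  -- construct `g : M →ₗ[A] A⧸𝔭` with `g ∘ f = y • id`
  have hrange : ∀ m : M, y • m ∈ LinearMap.range f := by
    intro m
    have := hyQ (Submodule.Quotient.mk m)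
    rwa [← Submodule.Quotient.mk_smul, Submodule.Quotient.mk_eq_zero] at this
  let e : (A ⧸ 𝔭) ≃ₗ[A] LinearMap.range f := LinearEquiv.ofInjective f hf
  let g : M →ₗ[A] (A ⧸ 𝔭) :=
    e.symm.toLinearMap.comp (LinearMap.codRestrict (LinearMap.range f)
      (y • LinearMap.id) hrange)
  have hgf : ∀ a : A ⧸ 𝔭, g (f a) = y • a := by
    intro a
    have : (⟨y • f a, hrange (f a)⟩ : LinearMap.range f) = e (y • a) := by
      apply Subtype.ext
      simp [e, LinearEquiv.ofInjective_apply, map_smul]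
    simp only [g, LinearMap.comp_apply, LinearMap.codRestrict_apply]
    show e.symm ⟨y • f a, hrange (f a)⟩ = y • a
    rw [this, LinearEquiv.symm_apply_apply]
  intro i hi
  rw [Module.mem_annihilator]
  let fc : ModuleCat.of A (A ⧸ 𝔭) ⟶ ModuleCat.of A M := ModuleCat.ofHom f
  let gc : ModuleCat.of A M ⟶ ModuleCat.of A (A ⧸ 𝔭) := ModuleCat.ofHom g
  have hcomp : fc ≫ gc = y • 𝟙 (ModuleCat.of A (A ⧸ 𝔭)) := by
    apply ModuleCat.hom_ext
    apply LinearMap.ext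
    intro a
    exact hgf a
  have hmapped : (localCohomology (IsLocalRing.maximalIdeal A) i).map fc ≫
      (localCohomology (IsLocalRing.maximalIdeal A) i).map gc =
      y • 𝟙 ((localCohomology (IsLocalRing.maximalIdeal A) i).obj
        (ModuleCat.of A (A ⧸ 𝔭))) := by
    rw [← CategoryTheory.Functor.map_comp, hcomp,
      LocalCohomAux.localCohomology_map_smul (IsLocalRing.maximalIdeal A) i
        (𝟙 (ModuleCat.of A (A ⧸ 𝔭))) y,
      CategoryTheory.Functor.map_id]
  have hyt : ∀ s : (localCohomology (IsLocalRing.maximalIdeal A) i).obj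
      (ModuleCat.of A (A ⧸ 𝔭)), y • s =
      (localCohomology (IsLocalRing.maximalIdeal A) i).map gc
        ((localCohomology (IsLocalRing.maximalIdeal A) i).map fc s) := by
    intro s
    have := congrArg (fun (ψ : (localCohomology (IsLocalRing.maximalIdeal A) i).obj
      (ModuleCat.of A (A ⧸ 𝔭)) ⟶ (localCohomology (IsLocalRing.maximalIdeal A) i).obj
      (ModuleCat.of A (A ⧸ 𝔭))) => ψ s) hmapped
    simpa using this.symm
  have hxM : ∀ s : (localCohomology (IsLocalRing.maximalIdeal A) i).obj (ModuleCat.of A M),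
      x • s = 0 := by
    intro s
    exact Module.mem_annihilator.mp (hx i hi) s
  intro t
  have hxy : (x * y) • t = 0 := by
    rw [mul_smul, hyt t,
      ← map_smul ((localCohomology (IsLocalRing.maximalIdeal A) i).map gc).hom,
      hxM, map_zero]
  rw [pow_two, mul_smul, hxy, smul_zero]
end
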